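/- arXiv:2309.12406 — 2 statements merged into one kernel-verified Lean document; each statement's English description precedes it below -/
import Mathlib

section
/- Let φ₀ : ℝ → ℝ be twice differentiable, k > 0, and define φ₁(t) = φ₀(t) + k·φ₀'(t). If φ₀(0) ≤ 0, φ₁(0) ≤ 0, and for all t ≥ 0, φ₁(t) ≥ 0 implies φ₁'(t) < 0, then for all t ≥ 0 both φ₀(t) ≤ 0 and φ₁(t) ≤ 0. -/
theorem stmt_6 (φ₀ : ℝ → ℝ) (k : ℝ)
    (hφ₀ : Differentiable ℝ φ₀) (hφ₀' : Differentiable ℝ (deriv φ₀))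
    (hk : 0 < k)
    (φ₁ : ℝ → ℝ) (hφ₁ : φ₁ = fun t => φ₀ t + k * deriv φ₀ t)
    (h00 : φ₀ 0 ≤ 0) (h10 : φ₁ 0 ≤ 0)
    (hdec : ∀ t : ℝ, 0 ≤ t → 0 ≤ φ₁ t → deriv φ₁ t < 0) :
    ∀ t : ℝ, 0 ≤ t → φ₀ t ≤ 0 ∧ φ₁ t ≤ 0 := by
  have hD1 : Differentiable ℝ φ₁ := by
    rw [hφ₁]; exact hφ₀.add ((differentiable_const k).mul hφ₀')
  have hC1 : Continuous φ₁ := hD1.continuous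
  -- Step 1: φ₁ ≤ 0 on [0, ∞)
  have h1 : ∀ t : ℝ, 0 ≤ t → φ₁ t ≤ 0 := by
    intro t₀ ht₀
    by_contra hpos
    push_neg at hpos
    set S : Set ℝ := Set.Icc 0 t₀ ∩ φ₁ ⁻¹' Set.Iic 0 with hS
    have hSclosed : IsClosed S := isClosed_Icc.inter (isClosed_Iic.preimage hC1)
    have hSne : S.Nonempty := ⟨0, ⟨le_refl 0, ht₀⟩, h10⟩
    have hSbdd : BddAbove S := ⟨t₀, fun x hx => hx.1.2⟩
    set s := sSup S with hs
    have hsS : s ∈ S := hSclosed.csSup_mem hSne hSbdd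
    have hs0 : 0 ≤ s := hsS.1.1
    have hsle : φ₁ s ≤ 0 := hsS.2
    have hst : s < t₀ := lt_of_le_of_ne hsS.1.2
      (fun h => absurd hsle (by rw [h]; exact not_le.mpr hpos))
    have hright : ∀ x ∈ Set.Ioc s t₀, 0 < φ₁ x := by
      intro x hx
      by_contra hle
      push_neg at hle
      have hxS : x ∈ S := ⟨⟨le_trans hs0 hx.1.le, hx.2⟩, hle⟩
      exact absurd (le_csSup hSbdd hxS) (not_le.mpr hx.1)
    have hIoc : Set.Ioc s t₀ ∈ nhdsWithin s (Set.Ioi s) :=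
      Filter.mem_of_superset (Ioo_mem_nhdsGT hst) Set.Ioo_subset_Ioc_self
    have hφ₁s : 0 ≤ φ₁ s := by
      have htend : Filter.Tendsto φ₁ (nhdsWithin s (Set.Ioi s)) (nhds (φ₁ s)) :=
        (hC1.continuousAt.tendsto).mono_left nhdsWithin_le_nhds
      refine ge_of_tendsto htend ?_
      filter_upwards [hIoc] with x hx using (hright x hx).le
    have hslope : Filter.Tendsto (slope φ₁ s) (nhdsWithin s (Set.Ioi s))
        (nhds (deriv φ₁ s)) := by
      have := hasDerivAt_iff_tendsto_slope.mp (hD1 s).hasDerivAt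
      exact this.mono_left (nhdsWithin_mono s (fun x hx => ne_of_gt hx))
    have hderiv_nonneg : 0 ≤ deriv φ₁ s := by
      refine ge_of_tendsto hslope ?_
      filter_upwards [hIoc] with x hx
      have hnum : 0 < φ₁ x - φ₁ s := by
        have := hright x hx
        linarith
      have hden : 0 < x - s := sub_pos.mpr hx.1
      exact le_of_lt (by rw [slope_def_field]; exact div_pos hnum hden)
    exact absurd (hdec s hs0 hφ₁s) (not_lt.mpr hderiv_nonneg)
  -- Step 2: φ₀ ≤ 0 on [0, ∞), via ψ t = exp(t/k) φ₀ t
  intro t ht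
  refine ⟨?_, h1 t ht⟩
  set ψ : ℝ → ℝ := fun x => Real.exp (x / k) * φ₀ x with hψ
  have hψderiv : ∀ x : ℝ, HasDerivAt ψ (Real.exp (x / k) / k * φ₁ x) x := by
    intro x
    have he : HasDerivAt (fun y : ℝ => Real.exp (y / k)) (Real.exp (x / k) * (1 / k)) x := by
      have h1 : HasDerivAt (fun y : ℝ => y / k) (1 / k) x := by
        simpa using (hasDerivAt_id x).div_const k
      exact (Real.hasDerivAt_exp (x / k)).comp x h1
    have := he.mul (hφ₀ x).hasDerivAt
    convert this using 1
    · rfl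
    · rfl
    · rfl
    rw [hφ₁]
    field_simp
  have hanti : AntitoneOn ψ (Set.Ici (0 : ℝ)) := by
    refine antitoneOn_of_deriv_nonpos (convex_Ici 0)
      (Continuous.continuousOn (by
        exact (Real.continuous_exp.comp (continuous_id.div_const k)).mul hφ₀.continuous)) ?_ ?_
    · intro x hx
      exact (hψderiv x).differentiableAt.differentiableWithinAt
    · intro x hx
      rw [interior_Ici] at hx
      rw [(hψderiv x).deriv]
      have h1x : φ₁ x ≤ 0 := h1 x (le_of_lt hx)
      have : 0 < Real.exp (x / k) / k := div_pos (Real.exp_pos _) hk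
      nlinarith
  have hψt : ψ t ≤ ψ 0 := hanti (Set.mem_Ici.mpr le_rfl) ht ht
  have hψ0 : ψ 0 = φ₀ 0 := by simp [hψ]
  have : Real.exp (t / k) * φ₀ t ≤ 0 := by rw [hψ0] at hψt; exact le_trans hψt h00
  nlinarith [Real.exp_pos (t / k)]
end

section
/- Let φ₀, φ₁, …, φ_n : ℝ → ℝ be differentiable functions with φⱼ = φ_{j-1} + aⱼ·φ'_{j-1} for j = 1,…,n, where each aⱼ > 0. Suppose φⱼ(0) ≤ 0 for all j = 0,…,n, and for all t ≥ 0, φ_n(t) ≥ 0 implies φ'_n(t) < 0. Then for all t ≥ 0 and all j = 0,…,n, φⱼ(t) ≤ 0. -/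
/-- If f(0) ≤ 0 and f'(t) < 0 whenever t ≥ 0 and f(t) ≥ 0, then f ≤ 0 on [0,∞). -/
lemma lemA (f : ℝ → ℝ) (hf : Differentiable ℝ f) (h0 : f 0 ≤ 0)
    (hdec : ∀ t, 0 ≤ t → 0 ≤ f t → deriv f t < 0) : ∀ t, 0 ≤ t → f t ≤ 0 := by
  intro t ht
  by_contra hpos
  push_neg at hpos
  set S : Set ℝ := Set.Icc 0 t ∩ {u | f u ≤ 0} with hS
  have hne : (0:ℝ) ∈ S := ⟨⟨le_refl 0, ht⟩, h0⟩
  have hbdd : BddAbove S := ⟨t, fun u hu => hu.1.2⟩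
  set s := sSup S with hs
  have hs0 : 0 ≤ s := le_csSup hbdd hne
  have hst : s ≤ t := csSup_le ⟨0, hne⟩ (fun u hu => hu.1.2)
  have hclosed : IsClosed S :=
    isClosed_Icc.inter (isClosed_le hf.continuous continuous_const)
  have hsS : s ∈ S := hclosed.csSup_mem ⟨0, hne⟩ hbdd
  have hfs : f s ≤ 0 := hsS.2
  have hslt : s < t := by
    rcases lt_or_eq_of_le hst with h | h
    · exact h
    · exfalso; rw [h] at hfs; linarith
  have hposmid : ∀ u ∈ Set.Ioc s t, 0 < f u := by
    intro u hu
    by_contra hc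
    push_neg at hc
    have : u ∈ S := ⟨⟨le_trans hs0 hu.1.le, hu.2⟩, hc⟩
    exact absurd (le_csSup hbdd this) (not_le.mpr hu.1)
  have hanti : StrictAntiOn f (Set.Icc s t) := by
    apply strictAntiOn_of_deriv_neg (convex_Icc s t) hf.continuous.continuousOn
    intro x hx
    rw [interior_Icc] at hx
    exact hdec x (le_trans hs0 hx.1.le) (hposmid x ⟨hx.1, hx.2.le⟩).le
  have := hanti (Set.left_mem_Icc.mpr hst) (Set.right_mem_Icc.mpr hst) hslt
  linarith

/-- Grönwall-type: if f(0) ≤ 0 and a·f'(t) ≤ -f(t) for t ≥ 0 (a > 0), then f ≤ 0 on [0,∞). -/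
lemma lemB (f : ℝ → ℝ) (a : ℝ) (hapos : 0 < a) (hf : Differentiable ℝ f) (h0 : f 0 ≤ 0)
    (hineq : ∀ t, 0 ≤ t → a * deriv f t ≤ -f t) : ∀ t, 0 ≤ t → f t ≤ 0 := by
  set g : ℝ → ℝ := fun t => f t * Real.exp (t / a) with hg
  have hgd : ∀ x : ℝ, HasDerivAt g ((deriv f x + f x / a) * Real.exp (x / a)) x := by
    intro x
    have h1 : HasDerivAt f (deriv f x) x := (hf x).hasDerivAt
    have h2 : HasDerivAt (fun t : ℝ => Real.exp (t / a)) (Real.exp (x / a) * (1 / a)) x := by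
      have := ((hasDerivAt_id x).div_const a).exp
      simpa using this
    have := h1.mul h2
    exact this.congr_deriv (by ring)
  have hgdiff : Differentiable ℝ g := fun x => (hgd x).differentiableAt
  have hanti : AntitoneOn g (Set.Ici 0) := by
    apply antitoneOn_of_deriv_nonpos (convex_Ici 0) hgdiff.continuous.continuousOn
      (fun x _ => (hgdiff x).differentiableWithinAt)
    intro x hx
    rw [interior_Ici] at hx
    rw [(hgd x).deriv]
    have hx0 : (0:ℝ) ≤ x := le_of_lt hx
    have h := hineq x hx0
    have hexp : 0 < Real.exp (x / a) := Real.exp_pos _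
    have h2 : a * (deriv f x + f x / a) = a * deriv f x + f x := by field_simp
    have h3 : a * (deriv f x + f x / a) ≤ 0 := by rw [h2]; linarith
    have : deriv f x + f x / a ≤ 0 := nonpos_of_mul_nonpos_right h3 hapos
    nlinarith
  intro t ht
  have hg0 : g 0 = f 0 := by simp [hg]
  have hgle : g t ≤ g 0 := hanti (Set.mem_Ici.mpr le_rfl) (Set.mem_Ici.mpr ht) ht
  have hexp : 0 < Real.exp (t / a) := Real.exp_pos _
  have hgt : f t * Real.exp (t / a) ≤ 0 := by rw [hg0] at hgle; simpa [hg] using hgle.trans h0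
  nlinarith

theorem stmt_13 (n : ℕ) (φ : ℕ → ℝ → ℝ) (a : ℕ → ℝ)
    (hd : ∀ j ≤ n, Differentiable ℝ (φ j))
    (ha : ∀ j, 1 ≤ j → j ≤ n → 0 < a j)
    (hrec : ∀ j, 1 ≤ j → j ≤ n → ∀ t, φ j t = φ (j - 1) t + a j * deriv (φ (j - 1)) t)
    (h0 : ∀ j ≤ n, φ j 0 ≤ 0)
    (hdec : ∀ t : ℝ, 0 ≤ t → 0 ≤ φ n t → deriv (φ n) t < 0) :
    ∀ t : ℝ, 0 ≤ t → ∀ j ≤ n, φ j t ≤ 0 := by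
  -- downward induction: for all k ≤ n, φ (n - k) ≤ 0 on [0, ∞)
  have key : ∀ k, k ≤ n → ∀ t, 0 ≤ t → φ (n - k) t ≤ 0 := by
    intro k
    induction k with
    | zero =>
      intro _ t ht
      simpa using lemA (φ n) (hd n le_rfl) (h0 n le_rfl) hdec t ht
    | succ k ih =>
      intro hk t ht
      have hk' : k ≤ n := Nat.le_of_succ_le hk
      have ihk := ih hk'
      set j := n - (k + 1) with hj
      have hj1 : j + 1 = n - k := by omega
      have hj1le : 1 ≤ j + 1 := by omega
      have hj1n : j + 1 ≤ n := by omega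
      have hrec' := hrec (j + 1) hj1le hj1n
      simp only [Nat.add_sub_cancel] at hrec'
      have haj : 0 < a (j + 1) := ha (j + 1) hj1le hj1n
      apply lemB (φ j) (a (j + 1)) haj (hd j (by omega)) (h0 j (by omega)) _ t ht
      intro u hu
      have := hrec' u
      have hjn : φ (j + 1) u ≤ 0 := by rw [hj1]; exact ihk u hu
      linarith
  intro t ht j hj
  have := key (n - j) (by omega) t ht
  have hnj : n - (n - j) = j := by omega
  rwa [hnj] at this
end
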